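/- Let F be a finite set of good real polynomials in the two variables k, c such that in every p ∈ F the coefficient of the monomial k³·c is zero, and let h : ℕ₊ × ℕ₊ → ℝ be a function such that for all k, c ∈ ℕ₊ there exists p ∈ F with p(k, c) = h(k, c). Then for every ε > 0 there exist k, c ∈ ℕ₊ such that |h(k, c)/(k³+k²+kc) − (k²+kc)kc/(k³+k²+kc)| > ε. In particular, (k, c) ↦ h(k, c)/(k³+k²+kc) does not uniformly approximate (k, c) ↦ (k²+kc)kc/(k³+k²+kc). -/

import Mathlib

open MvPolynomial

/-- A two-variable real polynomial (variable `0` = k, variable `1` = c) is *good* if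
every monomial with positive degree in `c` also has positive degree in `k`. -/
def GoodPoly (p : MvPolynomial (Fin 2) ℝ) : Prop :=
  ∀ m ∈ p.support, 0 < m 1 → 0 < m 0

lemma coeff_subst_aux (p : MvPolynomial (Fin 2) ℝ) (N n : ℕ) :
    (MvPolynomial.aeval ![Polynomial.X, Polynomial.X ^ N] p : Polynomial ℝ).coeff n
      = ∑ d ∈ p.support, if d 0 + N * d 1 = n then p.coeff d else 0 := by
  rw [MvPolynomial.aeval_def, MvPolynomial.eval₂_eq', Polynomial.finset_sum_coeff]
  refine Finset.sum_congr rfl fun d _ => ?_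
  have : ∏ i : Fin 2, (![Polynomial.X, Polynomial.X ^ N] i) ^ d i
      = (Polynomial.X : Polynomial ℝ) ^ (d 0 + N * d 1) := by
    rw [Fin.prod_univ_two]
    simp [← pow_mul, ← pow_add, mul_comm]
  rw [this]
  simp only [Polynomial.algebraMap_eq, Polynomial.coeff_C_mul, Polynomial.coeff_X_pow]
  split <;> simp_all [eq_comm]

lemma eval_subst_aux (p : MvPolynomial (Fin 2) ℝ) (N : ℕ) (x : ℝ) :
    Polynomial.eval x (MvPolynomial.aeval ![Polynomial.X, Polynomial.X ^ N] p : Polynomial ℝ)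
      = MvPolynomial.eval ![x, x ^ N] p := by
  rw [MvPolynomial.aeval_def,
    show Polynomial.eval x (eval₂ (algebraMap ℝ (Polynomial ℝ))
        ![Polynomial.X, Polynomial.X ^ N] p)
      = (Polynomial.evalRingHom x) (eval₂ (algebraMap ℝ (Polynomial ℝ))
        ![Polynomial.X, Polynomial.X ^ N] p) from rfl,
    MvPolynomial.eval₂_comp_left, ← MvPolynomial.eval₂_id]
  congr 1
  · ext r; simp
  · funext i; fin_cases i <;> simp

theorem no_k3c_monomial_not_approx (h : ℕ → ℕ → ℝ)
    (F : Finset (MvPolynomial (Fin 2) ℝ))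
    (hgood : ∀ p ∈ F, GoodPoly p)
    (hcoeff : ∀ p ∈ F,
      MvPolynomial.coeff (Finsupp.single 0 3 + Finsupp.single 1 1) p = 0)
    (hdesc : ∀ k c : ℕ, 0 < k → 0 < c →
      ∃ p ∈ F, eval ![(k : ℝ), (c : ℝ)] p = h k c) :
    ∀ ε : ℝ, 0 < ε → ∃ k c : ℕ, 0 < k ∧ 0 < c ∧
      |h k c / ((k : ℝ) ^ 3 + (k : ℝ) ^ 2 + (k : ℝ) * (c : ℝ)) -
        ((k : ℝ) ^ 2 + (k : ℝ) * (c : ℝ)) * (k : ℝ) * (c : ℝ) /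
          ((k : ℝ) ^ 3 + (k : ℝ) ^ 2 + (k : ℝ) * (c : ℝ))| > ε := by
  intro ε hε
  by_contra hcon
  push_neg at hcon
  set N : ℕ := F.sup (fun p => p.degreeOf 0) + 4 with hNdef
  set Q : MvPolynomial (Fin 2) ℝ → Polynomial ℝ := fun p =>
    (MvPolynomial.aeval ![Polynomial.X, Polynomial.X ^ N] p : Polynomial ℝ)
      - Polynomial.X ^ (N + 3) - Polynomial.X ^ (2 * N + 2) with hQdef
  -- the coefficient of X^(N+3) in Q p is -1
  have hQcoeff : ∀ p ∈ F, (Q p).coeff (N + 3) = -1 := by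
    intro p hp
    have hsum : (∑ d ∈ p.support,
        if d 0 + N * d 1 = N + 3 then p.coeff d else 0) = 0 := by
      refine Finset.sum_eq_zero fun d hd => ?_
      by_cases heq : d 0 + N * d 1 = N + 3
      · rw [if_pos heq]
        have hd0 : d 0 ≤ F.sup (fun p => p.degreeOf 0) := by
          refine le_trans ?_ (Finset.le_sup (f := fun q => q.degreeOf 0) hp)
          have := MvPolynomial.degreeOf_eq_sup 0 p
          rw [this]
          exact Finset.le_sup (f := fun m => m 0) hd
        rcases Nat.lt_or_ge (d 1) 2 with h1 | h1
        · have h1' : d 1 = 0 ∨ d 1 = 1 := by omega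
          rcases h1' with h1' | h1'
          · exfalso; rw [h1'] at heq; omega
          · -- d 1 = 1, so d 0 = 3 and d = single 0 3 + single 1 1
            have hd3 : d 0 = 3 := by rw [h1'] at heq; omega
            have : d = Finsupp.single 0 3 + Finsupp.single 1 1 := by
              ext i
              fin_cases i <;> simp_all [Finsupp.single_apply]
            rw [this]
            exact hcoeff p hp
        · exfalso
          have : N * 2 ≤ N * d 1 := Nat.mul_le_mul_left N h1
          omega
      · rw [if_neg heq]
    have hco : (Q p).coeff (N + 3)
        = (MvPolynomial.aeval ![Polynomial.X, Polynomial.X ^ N] p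
            : Polynomial ℝ).coeff (N + 3)
          - ((Polynomial.X : Polynomial ℝ) ^ (N + 3)).coeff (N + 3)
          - ((Polynomial.X : Polynomial ℝ) ^ (2 * N + 2)).coeff (N + 3) := by
      rw [hQdef]; simp [Polynomial.coeff_sub]
    rw [hco, coeff_subst_aux, hsum, Polynomial.coeff_X_pow, Polynomial.coeff_X_pow,
      if_pos rfl, if_neg (show ¬(N + 3 = 2 * N + 2) by omega)]
    ring
  have hQne : ∀ p ∈ F, Q p ≠ 0 := by
    intro p hp hz
    have := hQcoeff p hp
    rw [hz] at this
    simp at this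
  have hQdeg : ∀ p ∈ F, N + 3 ≤ (Q p).natDegree := by
    intro p hp
    exact Polynomial.le_natDegree_of_ne_zero (by rw [hQcoeff p hp]; norm_num)
  set W : MvPolynomial (Fin 2) ℝ → Polynomial ℝ := fun p =>
    Q p * Q p - Polynomial.C (9 * ε ^ 2 + 1) * Polynomial.X ^ (2 * N + 2) with hWdef
  have hεne : (9 * ε ^ 2 + 1 : ℝ) ≠ 0 := by positivity
  -- W p tends to infinity
  have hWtendsto : ∀ p ∈ F, Filter.Tendsto (fun x => Polynomial.eval x (W p))
      Filter.atTop Filter.atTop := by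
    intro p hp
    have hQd := hQdeg p hp
    have hmul : (Q p * Q p).natDegree = (Q p).natDegree + (Q p).natDegree :=
      Polynomial.natDegree_mul (hQne p hp) (hQne p hp)
    have hCX : (Polynomial.C (9 * ε ^ 2 + 1) *
        Polynomial.X ^ (2 * N + 2) : Polynomial ℝ).natDegree = 2 * N + 2 :=
      Polynomial.natDegree_C_mul_X_pow _ _ hεne
    have hlt : (Polynomial.C (9 * ε ^ 2 + 1) *
        Polynomial.X ^ (2 * N + 2) : Polynomial ℝ).natDegree < (Q p * Q p).natDegree := by
      rw [hCX, hmul]; omega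
    have hWdeg : (W p).natDegree = (Q p * Q p).natDegree :=
      Polynomial.natDegree_sub_eq_left_of_natDegree_lt hlt
    refine Polynomial.tendsto_atTop_of_leadingCoeff_nonneg _ ?_ ?_
    · have hpos : 0 < (W p).natDegree := by rw [hWdeg, hmul]; omega
      exact Polynomial.natDegree_pos_iff_degree_pos.mp hpos
    · rw [Polynomial.leadingCoeff, hWdeg]
      have hc0 : (Polynomial.C (9 * ε ^ 2 + 1) *
          Polynomial.X ^ (2 * N + 2) : Polynomial ℝ).coeff (Q p * Q p).natDegree = 0 := by
        rw [Polynomial.coeff_C_mul, Polynomial.coeff_X_pow,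
          if_neg (show ¬((Q p * Q p).natDegree = 2 * N + 2) by rw [hmul]; omega), mul_zero]
      rw [hWdef]
      simp only [Polynomial.coeff_sub, hc0, sub_zero]
      rw [← Polynomial.leadingCoeff, Polynomial.leadingCoeff_mul]
      exact mul_self_nonneg _
  have hall : ∀ᶠ x : ℝ in Filter.atTop, ∀ p ∈ F, 0 < Polynomial.eval x (W p) := by
    rw [Filter.eventually_all_finset]
    intro p hp
    exact (hWtendsto p hp).eventually_gt_atTop 0
  obtain ⟨M, hM⟩ := Filter.eventually_atTop.mp hall
  -- pick k, c
  set k : ℕ := ⌈M⌉₊ + 1 with hkdef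
  set c : ℕ := k ^ N with hcdef
  have hk : 0 < k := Nat.succ_pos _
  have hc : 0 < c := Nat.pow_pos hk
  obtain ⟨p, hp, hpe⟩ := hdesc k c hk hc
  have hb := hcon k c hk hc
  set K : ℝ := (k : ℝ) with hKdef
  have hK1 : (1 : ℝ) ≤ K := by rw [hKdef]; exact_mod_cast hk
  have hK0 : (0 : ℝ) < K := lt_of_lt_of_le one_pos hK1
  have hKM : M ≤ K := by
    calc M ≤ (⌈M⌉₊ : ℝ) := Nat.le_ceil M
    _ ≤ K := by rw [hKdef, hkdef]; push_cast; linarith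
  have hcK : (c : ℝ) = K ^ N := by rw [hcdef, hKdef]; push_cast; ring
  have hpow1 : K * K ^ N = K ^ (N + 1) := (pow_succ' K N).symm
  have hD : (0 : ℝ) < K ^ 3 + K ^ 2 + K * K ^ N := by positivity
  rw [hcK] at hb hpe
  have e1 : K ^ 3 * K ^ N = K ^ (N + 3) := by rw [← pow_add, Nat.add_comm]
  have e2 : K ^ (N + 1) * K ^ (N + 1) = K ^ (2 * N + 2) := by
    rw [← pow_add]; congr 1; omega
  have hg : (K ^ 2 + K * K ^ N) * K * K ^ N = K ^ (N + 3) + K ^ (2 * N + 2) := by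
    have key : (K ^ 2 + K * K ^ N) * K * K ^ N
        = K ^ 3 * K ^ N + (K * K ^ N) * (K * K ^ N) := by ring
    rw [key, e1, hpow1, e2]
  have habs : |h k c - (K ^ (N + 3) + K ^ (2 * N + 2))|
      ≤ ε * (K ^ 3 + K ^ 2 + K * K ^ N) := by
    rw [div_sub_div_same, abs_div, abs_of_pos hD, div_le_iff₀ hD] at hb
    calc |h k c - (K ^ (N + 3) + K ^ (2 * N + 2))|
        = |h k c - (K ^ 2 + K * K ^ N) * K * K ^ N| := by rw [hg]
    _ ≤ ε * (K ^ 3 + K ^ 2 + K * K ^ N) := hb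
  have hQeval : Polynomial.eval K (Q p) = h k c - (K ^ (N + 3) + K ^ (2 * N + 2)) := by
    simp only [hQdef, Polynomial.eval_sub, Polynomial.eval_pow, Polynomial.eval_X]
    rw [eval_subst_aux, hpe]
    ring
  have hD3 : K ^ 3 + K ^ 2 + K * K ^ N ≤ 3 * K ^ (N + 1) := by
    have e3 : K ^ 3 ≤ K ^ (N + 1) := pow_le_pow_right₀ hK1 (by omega)
    have e4 : K ^ 2 ≤ K ^ (N + 1) := pow_le_pow_right₀ hK1 (by omega)
    linarith [hpow1.le, hpow1.ge]
  have habs2 : |Polynomial.eval K (Q p)| ≤ ε * (3 * K ^ (N + 1)) := by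
    rw [hQeval]
    refine habs.trans ?_
    nlinarith
  have hsq : (Polynomial.eval K (Q p)) ^ 2 ≤ 9 * ε ^ 2 * K ^ (2 * N + 2) := by
    have h1 : (Polynomial.eval K (Q p)) ^ 2 ≤ (ε * (3 * K ^ (N + 1))) ^ 2 := by
      rw [← sq_abs]
      have h0 : (0 : ℝ) ≤ |Polynomial.eval K (Q p)| := abs_nonneg _
      nlinarith
    calc (Polynomial.eval K (Q p)) ^ 2 ≤ (ε * (3 * K ^ (N + 1))) ^ 2 := h1
    _ = 9 * ε ^ 2 * (K ^ (N + 1) * K ^ (N + 1)) := by ring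
    _ = 9 * ε ^ 2 * K ^ (2 * N + 2) := by rw [e2]
  have hWpos := hM K hKM p hp
  have hWeval : Polynomial.eval K (W p)
      = Polynomial.eval K (Q p) * Polynomial.eval K (Q p)
        - (9 * ε ^ 2 + 1) * K ^ (2 * N + 2) := by
    simp [hWdef]
  rw [hWeval] at hWpos
  have hKpow : (1 : ℝ) ≤ K ^ (2 * N + 2) := one_le_pow₀ hK1
  nlinarith [sq_nonneg (Polynomial.eval K (Q p))]
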